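/- For every d ≥ 3, in the subgroup G = ⟨b_1, ..., b_{d-1}⟩ of the Hanoi Towers group, the first-level stabilizer st_G(L_1) equals the normal closure in G of the set S = {b_i² : i = 1, ..., d-1} ∪ {(b_i b_{i+1})³ : i = 1, ..., d-2} ∪ {[b_i, b_j] : 1 ≤ i, j ≤ d-1, |i - j| > 1}. -/

import Mathlib

open Equiv

namespace TreeFract

variable {X : Type*}

/-- The automorphism group of the rooted `d`-adic tree with vertex set the free
monoid `List X`: permutations of the vertex set fixing the root and sending
children of a vertex to children of its image (this is exactly incidence
preservation for the rooted tree). -/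
def AutT (X : Type*) : Subgroup (Equiv.Perm (List X)) where
  carrier := {g | g [] = [] ∧ ∀ (u : List X) (x : X), ∃ y : X, g (u ++ [x]) = g u ++ [y]}
  one_mem' := ⟨rfl, fun _ x => ⟨x, rfl⟩⟩
  mul_mem' := by
    rintro f g ⟨hf1, hf2⟩ ⟨hg1, hg2⟩
    refine ⟨?_, fun u x => ?_⟩
    · show f (g []) = []
      rw [hg1, hf1]
    · obtain ⟨y, hy⟩ := hg2 u x
      obtain ⟨z, hz⟩ := hf2 (g u) y
      exact ⟨z, by show f (g (u ++ [x])) = f (g u) ++ [z]; rw [hy, hz]⟩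
  inv_mem' := by
    rintro g ⟨hg1, hg2⟩
    have hinj := g.injective
    refine ⟨?_, fun u x => ?_⟩
    · apply hinj
      show g (g⁻¹ []) = g []
      rw [Equiv.Perm.coe_inv, Equiv.apply_symm_apply, hg1]
    · have hne : g⁻¹ (u ++ [x]) ≠ [] := by
        intro h
        have h2 : u ++ [x] = g [] := by
          conv_lhs => rw [← Equiv.apply_symm_apply g (u ++ [x]), ← Equiv.Perm.coe_inv, h]
        rw [hg1] at h2
        simp at h2
      obtain ⟨y, hy⟩ : ∃ y, g⁻¹ (u ++ [x]) = (g⁻¹ (u ++ [x])).dropLast ++ [y] :=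
        ⟨(g⁻¹ (u ++ [x])).getLast hne, (List.dropLast_append_getLast hne).symm⟩
      obtain ⟨z, hz⟩ := hg2 ((g⁻¹ (u ++ [x])).dropLast) y
      have happ : g ((g⁻¹ (u ++ [x])).dropLast) ++ [z] = u ++ [x] := by
        rw [← hz, ← hy, Equiv.Perm.coe_inv, Equiv.apply_symm_apply]
      have h2 : g ((g⁻¹ (u ++ [x])).dropLast) = u ∧ ([z] : List X) = [x] :=
        List.append_inj' happ rfl
      refine ⟨y, ?_⟩
      rw [hy]
      congr 1
      apply hinj
      rw [h2.1, Equiv.Perm.coe_inv, Equiv.apply_symm_apply]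

/-- The underlying function of the section of `g` at the vertex `u`. -/
def sectFun (g : Equiv.Perm (List X)) (u : List X) : List X → List X :=
  fun v => (g (u ++ v)).drop (g u).length

open scoped Classical in
/-- The section `g_u` of a tree automorphism `g` at a vertex `u`, i.e. the unique
automorphism with `g (u ++ v) = g u ++ g_u v` for all `v`.  (By convention it is
the identity for permutations which are not tree automorphisms.) -/
noncomputable def sect (g : Equiv.Perm (List X)) (u : List X) : Equiv.Perm (List X) :=
  if h : Function.Bijective (sectFun g u) then Equiv.ofBijective _ h else 1

/-- The underlying function of the label of `g` at the vertex `u`. -/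
def labelFun (g : Equiv.Perm (List X)) (u : List X) : X → X :=
  fun x => (g (u ++ [x])).getLastD x

open scoped Classical in
/-- The label `g_(u)` of a tree automorphism `g` at a vertex `u`: the permutation
of `X` with `g (u ++ [x]) = g u ++ [g_(u) x]`.  (By convention it is the identity
for permutations which are not tree automorphisms.) -/
noncomputable def label (g : Equiv.Perm (List X)) (u : List X) : Equiv.Perm X :=
  if h : Function.Bijective (labelFun g u) then Equiv.ofBijective _ h else 1

/-- The stabilizer `st_G(u)` of the vertex `u` in `G`. -/
def stV (G : Subgroup (Equiv.Perm (List X))) (u : List X) : Subgroup (Equiv.Perm (List X)) where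
  carrier := {g | g ∈ G ∧ g u = u}
  one_mem' := ⟨one_mem G, rfl⟩
  mul_mem' := by
    rintro f g ⟨hf, hf2⟩ ⟨hg, hg2⟩
    exact ⟨mul_mem hf hg, by show f (g u) = u; rw [hg2, hf2]⟩
  inv_mem' := by
    rintro g ⟨hg, hg2⟩
    refine ⟨inv_mem hg, ?_⟩
    apply g.injective
    show g (g⁻¹ u) = g u
    rw [Equiv.Perm.coe_inv, Equiv.apply_symm_apply, hg2]

/-- The stabilizer `st_G(L_n)` of the `n`-th level in `G`. -/
def stL (G : Subgroup (Equiv.Perm (List X))) (n : ℕ) : Subgroup (Equiv.Perm (List X)) where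
  carrier := {g | g ∈ G ∧ ∀ u : List X, u.length = n → g u = u}
  one_mem' := ⟨one_mem G, fun _ _ => rfl⟩
  mul_mem' := by
    rintro f g ⟨hf, hf2⟩ ⟨hg, hg2⟩
    exact ⟨mul_mem hf hg, fun u hu => by show f (g u) = u; rw [hg2 u hu, hf2 u hu]⟩
  inv_mem' := by
    rintro g ⟨hg, hg2⟩
    refine ⟨inv_mem hg, fun u hu => ?_⟩
    apply g.injective
    show g (g⁻¹ u) = g u
    rw [Equiv.Perm.coe_inv, Equiv.apply_symm_apply, hg2 u hu]

/-- `G` is self-similar: sections of elements of `G` lie in `G`. -/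
def SelfSimilar (G : Subgroup (Equiv.Perm (List X))) : Prop :=
  ∀ g ∈ G, ∀ u : List X, sect g u ∈ G

/-- `G` acts transitively on the first level of the tree. -/
def FirstLevelTransitive (G : Subgroup (Equiv.Perm (List X))) : Prop :=
  ∀ x y : X, ∃ g ∈ G, g [x] = [y]

/-- `G` is level transitive: it acts transitively on every level of the tree. -/
def LevelTransitive (G : Subgroup (Equiv.Perm (List X))) : Prop :=
  ∀ (n : ℕ) (u v : List X), u.length = n → v.length = n → ∃ g ∈ G, g u = v

/-- `G` is fractal: `ψ_u(st_G(u)) = G` for every vertex `u`. -/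
def Fractal (G : Subgroup (Equiv.Perm (List X))) : Prop :=
  ∀ u : List X,
    (fun g => sect g u) '' (stV G u : Set (Equiv.Perm (List X))) = (G : Set (Equiv.Perm (List X)))

/-- `G` is strongly fractal: `ψ_x(st_G(L_1)) = G` for every first-level vertex `x`. -/
def StronglyFractal (G : Subgroup (Equiv.Perm (List X))) : Prop :=
  ∀ x : X,
    (fun g => sect g [x]) '' (stL G 1 : Set (Equiv.Perm (List X))) = (G : Set (Equiv.Perm (List X)))

/-- `G` is super strongly fractal: `ψ_u(st_G(L_n)) = G` for every `n` and every `u ∈ L_n`. -/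
def SuperStronglyFractal (G : Subgroup (Equiv.Perm (List X))) : Prop :=
  ∀ (n : ℕ) (u : List X), u.length = n →
    (fun g => sect g u) '' (stL G n : Set (Equiv.Perm (List X))) = (G : Set (Equiv.Perm (List X)))

/-- The normal closure `⟨S⟩^G` of a subset `S ⊆ G` in the subgroup `G`, realized as a
subgroup of the ambient group: the subgroup generated by all `G`-conjugates of `S`. -/
def normalClosureIn (G : Subgroup (Equiv.Perm (List X))) (S : Set (Equiv.Perm (List X))) :
    Subgroup (Equiv.Perm (List X)) :=
  Subgroup.closure {t | ∃ g ∈ G, ∃ s ∈ S, t = g * s * g⁻¹}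

end TreeFract
namespace TreeFract

/-! ### The Hanoi towers generators -/

section Hanoi

variable {d : ℕ}

/-- The underlying function of the automorphism `a_{ij}` of the Hanoi Towers group:
it swaps the first occurrence of `i` or `j` in a word. -/
def hanoiFun (i j : Fin d) : List (Fin d) → List (Fin d)
  | [] => []
  | x :: w => if x = i then j :: w else if x = j then i :: w else x :: hanoiFun i j w

lemma hanoiFun_invol (i j : Fin d) : ∀ w, hanoiFun i j (hanoiFun i j w) = w
  | [] => rfl
  | x :: w => by
    by_cases h1 : x = i
    · subst h1
      by_cases h2 : j = x
      · simp [hanoiFun, h2]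
      · simp [hanoiFun, h2]
    · by_cases h2 : x = j
      · subst h2
        simp [hanoiFun, h1]
      · simp [hanoiFun, h1, h2, hanoiFun_invol i j w]

/-- The automorphism `a_{ij}` of the `d`-adic tree: its label at the root is the
transposition `(x_i x_j)`, its sections at the first-level vertices `x_i` and `x_j`
are trivial and all its other first-level sections equal `a_{ij}` again. -/
def hanoiA (i j : Fin d) : Equiv.Perm (List (Fin d)) :=
  ⟨hanoiFun i j, hanoiFun i j, hanoiFun_invol i j, hanoiFun_invol i j⟩

end Hanoi

/-- The generator `b_i = a_{i,i+1}` (here `i` runs through `0, …, d-2`,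
corresponding to the paper's `b_1, …, b_{d-1}`). -/
def hanoiB (d : ℕ) (i : ℕ) (h : i + 1 < d) : Equiv.Perm (List (Fin d)) :=
  hanoiA ⟨i, Nat.lt_of_succ_lt h⟩ ⟨i + 1, h⟩

/-- The subgroup `G = ⟨b_1, …, b_{d-1}⟩` of the Hanoi Towers group. -/
def hanoiGroup (d : ℕ) : Subgroup (Equiv.Perm (List (Fin d))) :=
  Subgroup.closure {g | ∃ (i : ℕ) (h : i + 1 < d), g = hanoiB d i h}

/-! ### GGS groups (and the rooted automorphism `a`) -/

section GGS

variable {p : ℕ}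

/-- The function adding `m` to the first letter of a word over `ZMod p`. -/
def rotFun (m : ZMod p) : List (ZMod p) → List (ZMod p)
  | [] => []
  | x :: w => (x + m) :: w

/-- The rooted automorphism of the `p`-adic tree whose label at the root is the
`p`-cycle `x ↦ x + m`; for `m = 1` this is the generator `a` of a GGS-group
(identifying `x_i` with `i mod p`). -/
def rotPerm (m : ZMod p) : Equiv.Perm (List (ZMod p)) :=
  ⟨rotFun m, rotFun (-m),
    by intro w; cases w <;> simp [rotFun],
    by intro w; cases w <;> simp [rotFun]⟩

/-- The underlying function of the GGS generator `b` with defining vector `e`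
(the value `e 0` is irrelevant; `e i` for `i ≠ 0` are the coordinates
`e_1, …, e_{p-1}`): `b` fixes the first level, its section at `x_i` is
`a^{e_i}` for `i = 1, …, p-1` and its section at `x_p` (identified with `0`)
is `b` again. -/
def ggsFun (e : ZMod p → ZMod p) : List (ZMod p) → List (ZMod p)
  | [] => []
  | x :: w => if x = 0 then x :: ggsFun e w else x :: rotFun (e x) w

lemma ggsFun_inv (e : ZMod p → ZMod p) : ∀ w, ggsFun (fun i => -(e i)) (ggsFun e w) = w
  | [] => rfl
  | x :: w => by
    by_cases h : x = 0
    · simp only [ggsFun, if_pos h]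
      rw [ggsFun_inv e w]
    · simp only [ggsFun, if_neg h]
      cases w <;> simp [rotFun]

/-- The GGS generator `b` with defining vector `e`, as a tree automorphism. -/
def ggsB (e : ZMod p → ZMod p) : Equiv.Perm (List (ZMod p)) :=
  ⟨ggsFun e, ggsFun (fun i => -(e i)), ggsFun_inv e, by
    intro w
    have h := ggsFun_inv (fun i => -(e i)) w
    simpa using h⟩

end GGS

/-- The GGS-group `G = ⟨a, b⟩` over the `p`-adic tree with defining vector `e`. -/
def ggsGroup (p : ℕ) (e : ZMod p → ZMod p) : Subgroup (Equiv.Perm (List (ZMod p))) :=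
  Subgroup.closure {rotPerm 1, ggsB e}

/-! ### The first Grigorchuk group -/

/-- The three directed generators `b, c, d` (for `k % 3 = 0, 1, 2` respectively) of the
first Grigorchuk group, defined by the mutual recursion
`b = (a, c)`, `c = (a, d)`, `d = (1, b)` (identifying `x_1` with `0` and `x_2` with `1`). -/
def griFun : ℕ → List (ZMod 2) → List (ZMod 2)
  | _, [] => []
  | k, x :: w => if x = 0 then (if k % 3 = 2 then x :: w else x :: rotFun 1 w)
                 else x :: griFun (k + 1) w

lemma griFun_invol : ∀ (w : List (ZMod 2)) (k : ℕ), griFun k (griFun k w) = w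
  | [], _ => rfl
  | x :: w, k => by
    by_cases h : x = 0
    · by_cases h3 : k % 3 = 2
      · simp [griFun, h, h3]
      · simp only [griFun, if_pos h, if_neg h3]
        cases w with
        | nil => rfl
        | cons y v =>
            have hy : y + 1 + 1 = y := by
              rw [add_assoc]
              simp [show (1 : ZMod 2) + 1 = 0 from rfl]
            simp [rotFun, hy]
    · simp only [griFun, if_neg h]
      rw [griFun_invol w (k + 1)]

/-- The generator `b` of the first Grigorchuk group, with sections `(a, c)`. -/
def griB : Equiv.Perm (List (ZMod 2)) :=
  ⟨griFun 0, griFun 0, fun w => griFun_invol w 0, fun w => griFun_invol w 0⟩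

/-- The generator `c` of the first Grigorchuk group, with sections `(a, d)`. -/
def griC : Equiv.Perm (List (ZMod 2)) :=
  ⟨griFun 1, griFun 1, fun w => griFun_invol w 1, fun w => griFun_invol w 1⟩

/-- The generator `d` of the first Grigorchuk group, with sections `(1, b)`. -/
def griD : Equiv.Perm (List (ZMod 2)) :=
  ⟨griFun 2, griFun 2, fun w => griFun_invol w 2, fun w => griFun_invol w 2⟩

/-- The first Grigorchuk group `𝒢 = ⟨a, b, c, d⟩` acting on the binary tree. -/
def grigorchukGroup : Subgroup (Equiv.Perm (List (ZMod 2))) :=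
  Subgroup.closure {rotPerm 1, griB, griC, griD}

end TreeFract

namespace TreeFract

set_option linter.dupNamespace false

open scoped commutatorElement


namespace TreeFractAux

variable {Q : Type*} [Group Q]

/-- `tProd s k m = s k * s (k+1) * ⋯ * s (m-1)`. -/
def tProd (s : ℕ → Q) (k m : ℕ) : Q := ((List.range' k (m - k)).map s).prod

lemma tProd_of_le (s : ℕ → Q) {k m : ℕ} (h : m ≤ k) : tProd s k m = 1 := by
  simp [tProd, Nat.sub_eq_zero_of_le h]

lemma tProd_self (s : ℕ → Q) (m : ℕ) : tProd s m m = 1 := tProd_of_le s le_rfl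

lemma tProd_succ (s : ℕ → Q) {k m : ℕ} (h : k < m) :
    tProd s k m = s k * tProd s (k + 1) m := by
  have h1 : m - k = (m - (k + 1)) + 1 := by omega
  simp [tProd, h1, List.range'_succ]

lemma braid_helper {a b : Q} (ha : a ^ 2 = 1) (hb : b ^ 2 = 1) (h : (a * b) ^ 3 = 1) :
    a * b * a = b * a * b := by
  have ha' : a⁻¹ = a := by
    rw [inv_eq_iff_mul_eq_one, ← pow_two]; exact ha
  have hb' : b⁻¹ = b := by
    rw [inv_eq_iff_mul_eq_one, ← pow_two]; exact hb
  have h2 : (a * b * a) * (b * a * b) = 1 := by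
    rw [← h, pow_succ, pow_succ, pow_one]; group
  have h3 : a * b * a = (b * a * b)⁻¹ := by
    rw [eq_inv_iff_mul_eq_one]; exact h2
  rw [h3, mul_inv_rev, mul_inv_rev, ha', hb']
  group

section Main

variable {d : ℕ} (s : ℕ → Q)
variable (hs2 : ∀ i, i + 1 < d → s i ^ 2 = 1)
variable (hbr : ∀ i, i + 2 < d → (s (i + 1) * s i) ^ 3 = 1)
variable (hcm : ∀ i j, j + 1 < d → i + 2 ≤ j → s i * s j = s j * s i)

include hcm in
lemma comm_tProd {i k m : ℕ} (hik : i + 2 ≤ k) (hm : m < d) :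
    s i * tProd s k m = tProd s k m * s i := by
  by_cases h : m ≤ k
  · rw [tProd_of_le s h]; group
  · push_neg at h
    rw [tProd_succ s h, ← mul_assoc, hcm i k (by omega) hik, mul_assoc,
      comm_tProd (by omega) hm, mul_assoc]
termination_by m - k

include hs2 hbr hcm in
lemma shift_tProd {j k m : ℕ} (hkj : k ≤ j) (hjm : j + 2 ≤ m) (hm : m < d) :
    s (j + 1) * tProd s k m = tProd s k m * s j := by
  by_cases hkj' : k = j
  · subst hkj'
    rw [tProd_succ s (by omega : k < m), tProd_succ s (by omega : k + 1 < m)]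
    have hbraid : s (k + 1) * s k * s (k + 1) = s k * s (k + 1) * s k :=
      braid_helper (hs2 (k + 1) (by omega)) (hs2 k (by omega)) (hbr k (by omega))
    have hc : s k * tProd s (k + 2) m = tProd s (k + 2) m * s k :=
      comm_tProd s hcm le_rfl hm
    calc s (k + 1) * (s k * (s (k + 1) * tProd s (k + 1 + 1) m))
        = (s (k + 1) * s k * s (k + 1)) * tProd s (k + 2) m := by
          rw [show k + 1 + 1 = k + 2 from rfl]; group
      _ = (s k * s (k + 1) * s k) * tProd s (k + 2) m := by rw [hbraid]
      _ = s k * s (k + 1) * (s k * tProd s (k + 2) m) := by group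
      _ = s k * s (k + 1) * (tProd s (k + 2) m * s k) := by rw [hc]
      _ = s k * (s (k + 1) * tProd s (k + 1 + 1) m) * s k := by
          rw [show k + 1 + 1 = k + 2 from rfl]; group
  · have hlt : k < j := by omega
    rw [tProd_succ s (by omega : k < m), ← mul_assoc,
      (hcm k (j + 1) (by omega) (by omega)).symm, mul_assoc,
      shift_tProd (by omega : k + 1 ≤ j) hjm hm, mul_assoc]
termination_by j - k

end Main

end TreeFractAux

namespace TreeFractAux2
open TreeFractAux Subgroup

variable {Q : Type*} [Group Q] {d : ℕ} (s : ℕ → Q)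

/-- The subgroup generated by `s 0, …, s (m-2)`. -/
def Hm (m : ℕ) : Subgroup Q := Subgroup.closure {g | ∃ i, i + 1 < m ∧ g = s i}

/-- Permutations of `Fin d` fixing all points `≥ m`. -/
def fixFrom (d m : ℕ) : Subgroup (Equiv.Perm (Fin d)) where
  carrier := {σ | ∀ j : Fin d, m ≤ (j : ℕ) → σ j = j}
  one_mem' := fun _ _ => rfl
  mul_mem' := by
    intro σ τ hσ hτ j hj
    simp only [Equiv.Perm.mul_apply]
    rw [hτ j hj, hσ j hj]
  inv_mem' := by
    intro σ hσ j hj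
    apply σ.injective
    rw [Equiv.Perm.coe_inv, Equiv.apply_symm_apply, hσ j hj]

variable (φ : Q →* Equiv.Perm (Fin d))
variable (hφ : ∀ i (h : i + 1 < d), φ (s i) =
    Equiv.swap ⟨i, Nat.lt_of_succ_lt h⟩ ⟨i + 1, h⟩)

include hφ in
lemma Hm_le_fix {m : ℕ} (hm : m ≤ d) :
    ∀ q ∈ Hm s m, ∀ j : Fin d, m ≤ (j : ℕ) → φ q j = j := by
  have : Hm s m ≤ (fixFrom d m).comap φ := by
    apply Subgroup.closure_le _ |>.2
    rintro g ⟨i, hi, rfl⟩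
    intro j hj
    simp only [hφ i (by omega)]
    apply Equiv.swap_apply_of_ne_of_ne
    · exact Fin.ne_of_val_ne (by simp; omega)
    · exact Fin.ne_of_val_ne (by simp; omega)
  exact fun q hq => this hq

lemma tProd_mem {k m : ℕ} : tProd s k m ∈ Hm s (m + 1) := by
  by_cases h : m ≤ k
  · rw [tProd_of_le s h]; exact one_mem _
  · push_neg at h
    rw [tProd_succ s h]
    exact mul_mem (Subgroup.subset_closure ⟨k, by omega, rfl⟩) tProd_mem
termination_by m - k

include hφ in
lemma tApp {k m : ℕ} (hm : m < d) (hk : k ≤ m) :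
    φ (tProd s k m) ⟨m, hm⟩ = ⟨k, by omega⟩ := by
  rcases Nat.eq_or_lt_of_le hk with rfl | hlt
  · rw [tProd_self, map_one]; rfl
  · rw [tProd_succ s hlt, map_mul, Equiv.Perm.mul_apply, tApp hm hlt,
      hφ k (by omega)]
    have : (⟨k + 1, by omega⟩ : Fin d) = ⟨k + 1, by omega⟩ := rfl
    exact Equiv.swap_apply_right _ _
termination_by m - k

variable (hs2 : ∀ i, i + 1 < d → s i ^ 2 = 1)
variable (hbr : ∀ i, i + 2 < d → (s (i + 1) * s i) ^ 3 = 1)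
variable (hcm : ∀ i j, j + 1 < d → i + 2 ≤ j → s i * s j = s j * s i)

include hφ hs2 hbr hcm in
lemma key : ∀ m, m ≤ d → ∀ q ∈ Hm s m, φ q = 1 → q = 1 := by
  intro m
  induction m with
  | zero =>
    intro _ q hq _
    have hempty : {g : Q | ∃ i, i + 1 < 0 ∧ g = s i} = ∅ := by
      ext g; simp
    rw [Hm, hempty, Subgroup.closure_empty, Subgroup.mem_bot] at hq
    exact hq
  | succ m ih =>
    intro hm1 q hq hq1
    have hmd : m < d := hm1
    -- the coset decomposition
    set P : Q → Prop := fun q => ∃ k ≤ m, ∃ h ∈ Hm s m, q = tProd s k m * h with hP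
    have step : ∀ i, i + 1 < m + 1 → ∀ y, P y → P (s i * y) := by
      rintro i hi y ⟨k, hk, h, hh, rfl⟩
      have him : i < m := by omega
      rcases Nat.lt_or_ge (i + 2) k with hik | hik
      · -- i + 2 ≤ k (strict or eq handled below) -- here i+2 < k
        refine ⟨k, hk, s i * h, mul_mem (Subgroup.subset_closure ⟨i, by omega, rfl⟩) hh, ?_⟩
        rw [← mul_assoc, comm_tProd s hcm (by omega) hmd, mul_assoc]
      · rcases Nat.eq_or_lt_of_le hik with hik2 | hik2
        · -- i + 2 = k : still commuting case
          refine ⟨k, hk, s i * h, mul_mem (Subgroup.subset_closure ⟨i, by omega, rfl⟩) hh, ?_⟩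
          rw [← mul_assoc, comm_tProd s hcm (by omega) hmd, mul_assoc]
        · -- k < i + 2, i.e. k ≤ i + 1
          rcases Nat.lt_or_ge i k with hik3 | hik3
          · -- k ≤ i < k + 2 and i ≥ k means i = k - 1... here i < k, so k = i + 1
            have hk' : k = i + 1 := by omega
            subst hk'
            refine ⟨i, by omega, h, hh, ?_⟩
            rw [← mul_assoc, ← tProd_succ s (by omega : i < m)]
          · rcases Nat.eq_or_lt_of_le hik3 with hik4 | hik4
            · -- i = k
              obtain rfl : k = i := hik4
              refine ⟨k + 1, by omega, h, hh, ?_⟩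
              rw [tProd_succ s (by omega : k < m), ← mul_assoc, ← mul_assoc, ← pow_two,
                hs2 k (by omega), one_mul]
            · -- k < i
              have hi1 : i - 1 + 1 = i := by omega
              refine ⟨k, hk, s (i - 1) * h,
                mul_mem (Subgroup.subset_closure ⟨i - 1, by omega, rfl⟩) hh, ?_⟩
              have := shift_tProd s hs2 hbr hcm (by omega : k ≤ i - 1) (by omega) hmd
              rw [hi1] at this
              rw [← mul_assoc, this, mul_assoc]
    have hPq : ∀ x ∈ Hm s (m + 1), P x := by
      intro x hx
      refine Subgroup.closure_induction_left (p := fun x _ => P x) ?_ ?_ ?_ hx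
      · exact ⟨m, le_rfl, 1, one_mem _, by rw [tProd_self, mul_one]⟩
      · rintro x ⟨i, hi, rfl⟩ y _ hy
        exact step i hi y hy
      · rintro x ⟨i, hi, rfl⟩ y _ hy
        have hinv : (s i)⁻¹ = s i := by
          rw [inv_eq_iff_mul_eq_one, ← pow_two]; exact hs2 i (by omega)
        rw [hinv]
        exact step i hi y hy
    obtain ⟨k, hk, h, hh, rfl⟩ := hPq q hq
    have h1 : φ (tProd s k m * h) ⟨m, hmd⟩ = ⟨k, by omega⟩ := by
      rw [map_mul, Equiv.Perm.mul_apply,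
        Hm_le_fix s φ hφ (by omega) h hh ⟨m, hmd⟩ le_rfl, tApp s φ hφ hmd hk]
    rw [hq1] at h1
    have hkm : k = m := by
      have := Fin.mk.injEq .. ▸ h1
      simpa using h1.symm
    subst hkm
    rw [tProd_self, one_mul] at hq1 ⊢
    exact ih (by omega) _ hh hq1

end TreeFractAux2


open Subgroup

section Concrete

variable {d : ℕ}

/-! #### The level-one label homomorphism -/

/-- The label of `g` at the root, as a function. -/
def eFun (g : Equiv.Perm (List (Fin d))) (x : Fin d) : Fin d := (g [x]).getLastD x

/-- The subgroup of permutations of the tree preserving the first level setwise. -/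
def lvl1 (d : ℕ) : Subgroup (Equiv.Perm (List (Fin d))) where
  carrier := {g | ∀ x : Fin d, ∃ y, g [x] = [y]}
  one_mem' := fun x => ⟨x, rfl⟩
  mul_mem' := by
    rintro f g hf hg x
    obtain ⟨y, hy⟩ := hg x
    obtain ⟨z, hz⟩ := hf y
    exact ⟨z, by rw [Equiv.Perm.mul_apply, hy, hz]⟩
  inv_mem' := by
    intro g hg x
    choose e he using hg
    have hinj : Function.Injective e := by
      intro a b hab
      have : g [a] = g [b] := by rw [he a, he b, hab]
      simpa using g.injective this
    obtain ⟨x', hx'⟩ := Finite.injective_iff_surjective.mp hinj x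
    refine ⟨x', ?_⟩
    rw [← hx', ← he x', Equiv.Perm.coe_inv, Equiv.symm_apply_apply]

lemma apply_single {g : Equiv.Perm (List (Fin d))} (hg : g ∈ lvl1 d) (x : Fin d) :
    g [x] = [eFun g x] := by
  obtain ⟨y, hy⟩ := hg x
  rw [hy]
  simp [eFun, hy]

/-- The label-at-the-root homomorphism on `lvl1 d`. -/
def lvlHom (d : ℕ) : lvl1 d →* Equiv.Perm (Fin d) where
  toFun g :=
    { toFun := eFun g.1
      invFun := eFun g.1⁻¹
      left_inv := by
        intro x
        have h1 := apply_single (inv_mem g.2) (eFun g.1 x)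
        rw [← apply_single g.2 x, Equiv.Perm.coe_inv, Equiv.symm_apply_apply] at h1
        exact (List.cons.injEq .. ▸ h1.symm).1
      right_inv := by
        intro x
        have h1 := apply_single g.2 (eFun g.1⁻¹ x)
        rw [← apply_single (inv_mem g.2) x, Equiv.Perm.coe_inv, Equiv.apply_symm_apply] at h1
        exact (List.cons.injEq .. ▸ h1.symm).1 }
  map_one' := by
    ext x
    simp [eFun]
  map_mul' := by
    intro f g
    apply Equiv.ext
    intro x
    show eFun (f.1 * g.1) x = eFun f.1 (eFun g.1 x)
    have h1 := apply_single (mul_mem f.2 g.2) x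
    rw [Equiv.Perm.mul_apply, apply_single g.2 x, apply_single f.2 (eFun g.1 x)] at h1
    exact ((List.cons.injEq .. ▸ h1).1).symm

lemma hanoiA_single (i j x : Fin d) :
    hanoiA i j [x] = [Equiv.swap i j x] := by
  show hanoiFun i j [x] = [Equiv.swap i j x]
  by_cases h1 : x = i
  · subst h1; simp [hanoiFun, Equiv.swap_apply_left]
  · by_cases h2 : x = j
    · subst h2; simp [hanoiFun, h1, Equiv.swap_apply_right]
    · simp [hanoiFun, h1, h2, Equiv.swap_apply_of_ne_of_ne h1 h2]

lemma hanoiA_sq (i j : Fin d) : hanoiA i j * hanoiA i j = 1 := by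
  apply Equiv.ext
  intro w
  rw [Equiv.Perm.mul_apply]
  exact hanoiFun_invol i j w

lemma hanoiB_mem {i : ℕ} (h : i + 1 < d) : hanoiB d i h ∈ hanoiGroup d :=
  Subgroup.subset_closure ⟨i, h, rfl⟩

lemma hanoiGroup_le_lvl1 : hanoiGroup d ≤ lvl1 d := by
  apply (Subgroup.closure_le _).2
  rintro g ⟨i, h, rfl⟩ x
  exact ⟨_, hanoiA_single _ _ x⟩

/-- The label homomorphism on the Hanoi group. -/
def hanoiLab (d : ℕ) : hanoiGroup d →* Equiv.Perm (Fin d) :=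
  (lvlHom d).comp (Subgroup.inclusion hanoiGroup_le_lvl1)

lemma hanoiLab_apply (g : hanoiGroup d) (x : Fin d) :
    (g : Equiv.Perm (List (Fin d))) [x] = [hanoiLab d g x] :=
  apply_single (hanoiGroup_le_lvl1 g.2) x

/-- The generator of the Hanoi group as an element of the subgroup. -/
def BB {d : ℕ} (i : ℕ) (h : i + 1 < d) : hanoiGroup d := ⟨hanoiB d i h, hanoiB_mem h⟩

lemma hanoiLab_B {i : ℕ} (h : i + 1 < d) :
    hanoiLab d (BB i h) = Equiv.swap ⟨i, Nat.lt_of_succ_lt h⟩ ⟨i + 1, h⟩ := by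
  apply Equiv.ext
  intro x
  have h1 := hanoiLab_apply (BB i h) x
  have h2 := hanoiA_single (d := d) ⟨i, Nat.lt_of_succ_lt h⟩ ⟨i + 1, h⟩ x
  rw [show ((BB i h : hanoiGroup d) : Equiv.Perm (List (Fin d))) = hanoiB d i h from rfl] at h1
  rw [show hanoiB d i h = hanoiA (d := d) ⟨i, Nat.lt_of_succ_lt h⟩ ⟨i + 1, h⟩ from rfl] at h1
  rw [h2] at h1
  exact ((List.cons.injEq .. ▸ h1).1).symm

/-! #### Auxiliary permutation lemmas -/

lemma swap_cube_apply {α : Type*} [DecidableEq α] {a b c : α}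
    (hab : a ≠ b) (hac : a ≠ c) (hbc : b ≠ c) (x : α) :
    Equiv.swap b c (Equiv.swap a b (Equiv.swap b c (Equiv.swap a b
      (Equiv.swap b c (Equiv.swap a b x))))) = x := by
  set σ := Equiv.swap b c * Equiv.swap a b with hσ
  have ha : σ a = c := by
    simp [hσ, Equiv.Perm.mul_apply, Equiv.swap_apply_left]
  have hb : σ b = a := by
    simp only [hσ, Equiv.Perm.mul_apply, Equiv.swap_apply_right]
    exact Equiv.swap_apply_of_ne_of_ne hab hac
  have hc : σ c = b := by
    simp only [hσ, Equiv.Perm.mul_apply]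
    rw [Equiv.swap_apply_of_ne_of_ne (Ne.symm hac) (Ne.symm hbc), Equiv.swap_apply_right]
  have hcube : ∀ x, σ (σ (σ x)) = x := by
    intro x
    by_cases h1 : x = a
    · subst h1; rw [ha, hc, hb]
    · by_cases h2 : x = b
      · subst h2; rw [hb, ha, hc]
      · by_cases h3 : x = c
        · subst h3; rw [hc, hb, ha]
        · have hfix : σ x = x := by
            simp only [hσ, Equiv.Perm.mul_apply]
            rw [Equiv.swap_apply_of_ne_of_ne h1 h2, Equiv.swap_apply_of_ne_of_ne h2 h3]
          rw [hfix, hfix, hfix]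
  have h1 : ∀ y, σ y = Equiv.swap b c (Equiv.swap a b y) := fun y => rfl
  rw [← h1, ← h1, ← h1]
  exact hcube x

lemma swap_commute {α : Type*} [DecidableEq α] {a b c e : α}
    (hca : c ≠ a) (hcb : c ≠ b) (hea : e ≠ a) (heb : e ≠ b) :
    Commute (Equiv.swap a b) (Equiv.swap c e) := by
  apply Equiv.Perm.Disjoint.commute
  intro x
  by_cases h1 : x = a
  · subst h1; right; exact Equiv.swap_apply_of_ne_of_ne (Ne.symm hca) (Ne.symm hea)
  · by_cases h2 : x = b
    · subst h2; right; exact Equiv.swap_apply_of_ne_of_ne (Ne.symm hcb) (Ne.symm heb)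
    · left; exact Equiv.swap_apply_of_ne_of_ne h1 h2

end Concrete



section MainProof

variable {d : ℕ}

/-- The relator set of the presentation. -/
def Rel (d : ℕ) : Set (Equiv.Perm (List (Fin d))) :=
  {t | ∃ (i : ℕ) (h : i + 1 < d), t = (hanoiB d i h) ^ 2} ∪
  {t | ∃ (i : ℕ) (h : i + 2 < d),
      t = (hanoiB d (i + 1) h * hanoiB d i (Nat.lt_of_succ_lt h)) ^ 3} ∪
  {t | ∃ (i j : ℕ) (hi : i + 1 < d) (hj : j + 1 < d),
      (i + 1 < j ∨ j + 1 < i) ∧ t = ⁅hanoiB d i hi, hanoiB d j hj⁆}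

lemma Rel_sub_G : Rel d ⊆ hanoiGroup d := by
  rintro t ((⟨i, h, rfl⟩ | ⟨i, h, rfl⟩) | ⟨i, j, hi, hj, _, rfl⟩)
  · exact pow_mem (hanoiB_mem h) 2
  · exact pow_mem (mul_mem (hanoiB_mem h) (hanoiB_mem _)) 3
  · rw [commutatorElement_def]
    exact mul_mem (mul_mem (mul_mem (inv_mem (hanoiB_mem hi)) (inv_mem (hanoiB_mem hj)))
      (hanoiB_mem hi)) (hanoiB_mem hj)

lemma BB_sq {i : ℕ} (h : i + 1 < d) : (BB i h : hanoiGroup d) ^ 2 = 1 := by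
  apply Subtype.ext
  rw [SubmonoidClass.coe_pow, OneMemClass.coe_one, pow_two]
  exact hanoiA_sq _ _

lemma hanoiB_inv {i : ℕ} (h : i + 1 < d) : (hanoiB d i h)⁻¹ = hanoiB d i h := by
  have h2 := hanoiA_sq (d := d) ⟨i, Nat.lt_of_succ_lt h⟩ ⟨i + 1, h⟩
  exact inv_eq_of_mul_eq_one_right h2

lemma Rel_fix {t : Equiv.Perm (List (Fin d))} (ht : t ∈ Rel d) (x : Fin d) :
    t [x] = [x] := by
  rcases ht with (⟨i, h, rfl⟩ | ⟨i, h, rfl⟩) | ⟨i, j, hi, hj, hij, rfl⟩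
  · rw [pow_two, Equiv.Perm.mul_apply]
    exact hanoiFun_invol _ _ _
  · set a : Fin d := ⟨i, by omega⟩ with ha
    set b : Fin d := ⟨i + 1, by omega⟩ with hb
    set c : Fin d := ⟨i + 2, by omega⟩ with hc
    have hstep : ∀ y : Fin d,
        (hanoiB d (i + 1) h * hanoiB d i (Nat.lt_of_succ_lt h)) [y]
          = [Equiv.swap b c (Equiv.swap a b y)] := by
      intro y
      rw [Equiv.Perm.mul_apply]
      show hanoiA b c (hanoiA a b [y]) = _
      rw [hanoiA_single, hanoiA_single]
    rw [pow_succ, pow_succ, pow_one, Equiv.Perm.mul_apply, Equiv.Perm.mul_apply,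
      hstep, hstep, hstep]
    rw [swap_cube_apply (Fin.ne_of_val_ne (show i ≠ i + 1 by omega))
      (Fin.ne_of_val_ne (show i ≠ i + 2 by omega))
      (Fin.ne_of_val_ne (show i + 1 ≠ i + 2 by omega))]
  · set a : Fin d := ⟨i, by omega⟩ with ha
    set b : Fin d := ⟨i + 1, by omega⟩ with hb
    set c : Fin d := ⟨j, by omega⟩ with hc
    set e : Fin d := ⟨j + 1, by omega⟩ with he
    have hcomm := (swap_commute (a := a) (b := b) (c := c) (e := e)
      (Fin.ne_of_val_ne (show j ≠ i by omega)) (Fin.ne_of_val_ne (show j ≠ i + 1 by omega))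
      (Fin.ne_of_val_ne (show j + 1 ≠ i by omega))
      (Fin.ne_of_val_ne (show j + 1 ≠ i + 1 by omega))).eq
    have hcy : ∀ y, Equiv.swap a b (Equiv.swap c e y) = Equiv.swap c e (Equiv.swap a b y) := by
      intro y
      have := Equiv.ext_iff.mp hcomm y
      rwa [Equiv.Perm.mul_apply, Equiv.Perm.mul_apply] at this
    have hBi : ∀ y : Fin d, hanoiB d i hi [y] = [Equiv.swap a b y] := by
      intro y
      show hanoiA a b [y] = _
      rw [hanoiA_single]
    have hBj : ∀ y : Fin d, hanoiB d j hj [y] = [Equiv.swap c e y] := by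
      intro y
      show hanoiA c e [y] = _
      rw [hanoiA_single]
    rw [commutatorElement_def, hanoiB_inv hi, hanoiB_inv hj,
      Equiv.Perm.mul_apply, Equiv.Perm.mul_apply, Equiv.Perm.mul_apply,
      hBj, hBi, hBj, hBi, ← hcy, Equiv.swap_apply_self, Equiv.swap_apply_self]

end MainProof

theorem hanoiGroup_stL_one' (d : ℕ) (hd : 3 ≤ d) :
    stL (hanoiGroup d) 1 = normalClosureIn (hanoiGroup d) (Rel d) := by
  set G := hanoiGroup d with hG
  apply le_antisymm
  swap
  · -- normal closure ≤ stabilizer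
    show Subgroup.closure _ ≤ stL G 1
    apply (Subgroup.closure_le _).2
    rintro t ⟨g, hg, s, hs, rfl⟩
    refine ⟨mul_mem (mul_mem hg (Rel_sub_G hs)) (inv_mem hg), fun u hu => ?_⟩
    obtain ⟨x, rfl⟩ := List.length_eq_one_iff.mp hu
    have hginv : g⁻¹ ∈ lvl1 d := inv_mem (hanoiGroup_le_lvl1 hg)
    obtain ⟨y, hy⟩ := hginv x
    rw [Equiv.Perm.mul_apply, Equiv.Perm.mul_apply, hy, Rel_fix hs y, ← hy,
      Equiv.Perm.coe_inv, Equiv.apply_symm_apply]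
  · -- stabilizer ≤ normal closure
    intro g hgmem
    obtain ⟨hgG, hfix⟩ := hgmem
    set N := normalClosureIn G (Rel d) with hN
    show g ∈ N
    -- G normalizes N
    have hconj : ∀ g' ∈ G, ∀ n ∈ N, g' * n * g'⁻¹ ∈ N := by
      intro g' hg' n hn
      refine Subgroup.closure_induction ?_ ?_ ?_ ?_ hn
      · rintro t ⟨h', hh', s, hs, rfl⟩
        exact Subgroup.subset_closure ⟨g' * h', mul_mem hg' hh', s, hs, by group⟩
      · simpa using one_mem _
      · intro a b _ _ ha hb
        have h2 : g' * (a * b) * g'⁻¹ = (g' * a * g'⁻¹) * (g' * b * g'⁻¹) := by group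
        rw [h2]; exact mul_mem ha hb
      · intro a _ ha
        have h2 : g' * a⁻¹ * g'⁻¹ = (g' * a * g'⁻¹)⁻¹ := by group
        rw [h2]; exact inv_mem ha
    haveI hKnormal : (N.subgroupOf G).Normal := by
      constructor
      intro n hn g'
      rw [Subgroup.mem_subgroupOf] at hn ⊢
      have h2 : ((g' * n * g'⁻¹ : G) : Equiv.Perm (List (Fin d))) =
          (g' : Equiv.Perm (List (Fin d))) * n * (g' : Equiv.Perm (List (Fin d)))⁻¹ := rfl
      rw [h2]
      exact hconj _ g'.2 _ hn
    -- elements of N fix the first level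
    have hNfix : ∀ t ∈ N, ∀ x : Fin d, t [x] = [x] := by
      intro t ht
      refine Subgroup.closure_induction ?_ ?_ ?_ ?_ ht
      · rintro t ⟨g', hg', s, hs, rfl⟩ x
        have hginv : g'⁻¹ ∈ lvl1 d := inv_mem (hanoiGroup_le_lvl1 hg')
        obtain ⟨y, hy⟩ := hginv x
        rw [Equiv.Perm.mul_apply, Equiv.Perm.mul_apply, hy, Rel_fix hs y, ← hy,
          Equiv.Perm.coe_inv, Equiv.apply_symm_apply]
      · intro x; rfl
      · intro a b _ _ ha hb x
        rw [Equiv.Perm.mul_apply, hb, ha]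
      · intro a _ ha x
        apply a.injective
        rw [Equiv.Perm.coe_inv, Equiv.apply_symm_apply, ha]
    have hKker : N.subgroupOf G ≤ (hanoiLab d).ker := by
      intro x hx
      rw [Subgroup.mem_subgroupOf] at hx
      rw [MonoidHom.mem_ker]
      apply Equiv.ext; intro y
      have h1 := hanoiLab_apply x y
      rw [hNfix _ hx y] at h1
      simpa using h1.symm
    set φbar := QuotientGroup.lift (N.subgroupOf G) (hanoiLab d) hKker with hφbar
    set sQ : ℕ → G ⧸ N.subgroupOf G := fun i =>
      if h : i + 1 < d then QuotientGroup.mk' _ (BB i h) else 1 with hsQ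
    -- the hypotheses of the abstract presentation lemma
    have hφ : ∀ i (h : i + 1 < d), φbar (sQ i) =
        Equiv.swap ⟨i, Nat.lt_of_succ_lt h⟩ ⟨i + 1, h⟩ := by
      intro i h
      rw [hsQ]
      simp only [dif_pos h]
      rw [hφbar]
      show hanoiLab d (BB i h) = _
      exact hanoiLab_B h
    have hrel : ∀ t ∈ Rel d, ∀ (htG : t ∈ G),
        QuotientGroup.mk' (N.subgroupOf G) ⟨t, htG⟩ = 1 := by
      intro t ht htG
      rw [QuotientGroup.mk'_apply, QuotientGroup.eq_one_iff, Subgroup.mem_subgroupOf]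
      exact Subgroup.subset_closure ⟨1, one_mem G, t, ht, by group⟩
    have hs2 : ∀ i, i + 1 < d → sQ i ^ 2 = 1 := by
      intro i h
      rw [hsQ]
      simp only [dif_pos h]
      rw [← map_pow, BB_sq h, map_one]
    have hbr : ∀ i, i + 2 < d → (sQ (i + 1) * sQ i) ^ 3 = 1 := by
      intro i h
      rw [hsQ]
      simp only [dif_pos h, dif_pos (Nat.lt_of_succ_lt h)]
      rw [← map_mul, ← map_pow]
      exact hrel _ (Or.inl (Or.inr ⟨i, h, rfl⟩)) _
    have hcm : ∀ i j, j + 1 < d → i + 2 ≤ j → sQ i * sQ j = sQ j * sQ i := by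
      intro i j hj hij
      have hi : i + 1 < d := by omega
      apply Commute.eq
      apply commutatorElement_eq_one_iff_commute.mp
      rw [hsQ]
      simp only [dif_pos hi, dif_pos hj]
      rw [← map_commutatorElement]
      exact hrel _ (Or.inr ⟨i, j, hi, hj, Or.inl (by omega), rfl⟩) _
    -- the class of g lies in the subgroup generated by the sQ i
    have htop : (⟨g, hgG⟩ : G) ∈ Subgroup.closure
        ((hanoiGroup d).subtype ⁻¹' {g | ∃ (i : ℕ) (h : i + 1 < d), g = hanoiB d i h}) := by
      have h2 := Subgroup.closure_preimage_eq_top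
        {g : Equiv.Perm (List (Fin d)) | ∃ (i : ℕ) (h : i + 1 < d), g = hanoiB d i h}
      rw [show Subgroup.closure
          {g : Equiv.Perm (List (Fin d)) | ∃ (i : ℕ) (h : i + 1 < d), g = hanoiB d i h}
          = hanoiGroup d from rfl] at h2
      rw [h2]
      trivial
    have hq : QuotientGroup.mk' (N.subgroupOf G) ⟨g, hgG⟩ ∈
        TreeFractAux2.Hm sQ d := by
      have h2 := Subgroup.mem_map_of_mem (QuotientGroup.mk' (N.subgroupOf G)) htop
      rw [MonoidHom.map_closure] at h2
      refine Subgroup.closure_mono ?_ h2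
      rintro x ⟨u, hu, rfl⟩
      obtain ⟨i, h, hval⟩ := hu
      refine ⟨i, h, ?_⟩
      rw [hsQ]
      simp only [dif_pos h]
      congr 1
      exact Subtype.ext hval
    have hq1 : φbar (QuotientGroup.mk' (N.subgroupOf G) ⟨g, hgG⟩) = 1 := by
      rw [hφbar]
      show hanoiLab d ⟨g, hgG⟩ = 1
      apply Equiv.ext; intro y
      have h1 := hanoiLab_apply ⟨g, hgG⟩ y
      rw [show (((⟨g, hgG⟩ : G)) : Equiv.Perm (List (Fin d))) = g from rfl,
        hfix [y] rfl] at h1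
      simpa using h1.symm
    have hfinal := TreeFractAux2.key sQ φbar hφ hs2 hbr hcm d le_rfl
      (QuotientGroup.mk' (N.subgroupOf G) ⟨g, hgG⟩) hq hq1
    rw [QuotientGroup.mk'_apply, QuotientGroup.eq_one_iff, Subgroup.mem_subgroupOf] at hfinal
    exact hfinal


open scoped commutatorElement in
/-- For every `d ≥ 3`, in `G = ⟨b_1, …, b_{d-1}⟩ ≤ Aut T` the first
level stabilizer `st_G(L_1)` is the normal closure in `G` of
`{b_i²} ∪ {(b_i b_{i+1})³} ∪ {[b_i, b_j] : |i-j| > 1}` (indices shifted to start at `0`). -/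
theorem hanoiGroup_stL_one (d : ℕ) (hd : 3 ≤ d) :
    stL (hanoiGroup d) 1 =
      normalClosureIn (hanoiGroup d)
        ({t | ∃ (i : ℕ) (h : i + 1 < d), t = (hanoiB d i h) ^ 2} ∪
         {t | ∃ (i : ℕ) (h : i + 2 < d),
            t = (hanoiB d (i + 1) h * hanoiB d i (Nat.lt_of_succ_lt h)) ^ 3} ∪
         {t | ∃ (i j : ℕ) (hi : i + 1 < d) (hj : j + 1 < d),
            (i + 1 < j ∨ j + 1 < i) ∧ t = ⁅hanoiB d i hi, hanoiB d j hj⁆}) := by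
  exact hanoiGroup_stL_one' d hd

end TreeFract
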